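/- Let T ∈ ℕ, let γ > 0, c ≥ 0, L > 0 be reals and τ ≥ 1 a natural number, and let (r_t)_{t=0}^{T+1}, (s_t)_{t=0}^{T}, (R_t)_{t=0}^{T} be nonnegative real sequences such that for every t ∈ {0, …, T}: (1/4)·s_t ≤ (r_t − r_{t+1})/(4γ) + γc/8 + (L²/2)·R_t, and R_t ≤ (1/(30L²τ)) ∑_{k=max(t−τ,0)}^{t−1} s_k + γc/(6L²). Then (1/(5(T+1))) ∑_{t=0}^{T} s_t ≤ r_0/(4γ(T+1)) + γc/4. -/

import Mathlib

/-- Telescoping lemma (final step of the non-convex convergence proof). -/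
theorem telescoping_lemma (T : ℕ) (γ c L : ℝ) (τ : ℕ)
    (hγ : 0 < γ) (hc : 0 ≤ c) (hL : 0 < L) (hτ : 1 ≤ τ)
    (r s R : ℕ → ℝ)
    (hr : ∀ t ≤ T + 1, 0 ≤ r t) (hs : ∀ t ≤ T, 0 ≤ s t) (hR : ∀ t ≤ T, 0 ≤ R t)
    (h1 : ∀ t ≤ T, (1 / 4) * s t ≤ (r t - r (t + 1)) / (4 * γ) + γ * c / 8 + (L ^ 2 / 2) * R t)
    (h2 : ∀ t ≤ T, R t ≤ (1 / (30 * L ^ 2 * τ)) * ∑ k ∈ Finset.Ico (t - τ) t, s k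
        + γ * c / (6 * L ^ 2)) :
    (1 / (5 * (T + 1))) * ∑ t ∈ Finset.range (T + 1), s t ≤
      r 0 / (4 * γ * (T + 1)) + γ * c / 4 := by
  set S := ∑ t ∈ Finset.range (T + 1), s t with hSdef
  have hτR : (0:ℝ) < (τ:ℝ) := by exact_mod_cast Nat.lt_of_lt_of_le Nat.zero_lt_one hτ
  have hS0 : 0 ≤ S := Finset.sum_nonneg fun t ht => hs t (Nat.lt_succ_iff.mp (Finset.mem_range.mp ht))
  -- key counting bound
  have key : ∑ t ∈ Finset.range (T + 1), ∑ k ∈ Finset.Ico (t - τ) t, s k ≤ (τ:ℝ) * S := by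
    have step1 : ∑ t ∈ Finset.range (T + 1), ∑ k ∈ Finset.Ico (t - τ) t, s k
        = ∑ t ∈ Finset.range (T + 1), ∑ k ∈ Finset.range (T + 1),
            (if k ∈ Finset.Ico (t - τ) t then s k else 0) := by
      refine Finset.sum_congr rfl fun t ht => ?_
      rw [Finset.sum_ite_mem]
      congr 1
      symm
      rw [Finset.inter_eq_right]
      intro k hk
      simp only [Finset.mem_Ico] at hk
      simp only [Finset.mem_range] at ht ⊢
      omega
    rw [step1, Finset.sum_comm]
    have step2 : ∀ k ∈ Finset.range (T + 1),
        ∑ t ∈ Finset.range (T + 1), (if k ∈ Finset.Ico (t - τ) t then s k else 0)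
          ≤ (τ:ℝ) * s k := by
      intro k hk
      rw [← Finset.sum_filter, Finset.sum_const, nsmul_eq_mul]
      have hcard : (Finset.filter (fun t => k ∈ Finset.Ico (t - τ) t)
          (Finset.range (T + 1))).card ≤ τ := by
        have hsub : (Finset.filter (fun t => k ∈ Finset.Ico (t - τ) t)
            (Finset.range (T + 1))) ⊆ Finset.Ico (k + 1) (k + 1 + τ) := by
          intro t ht
          simp only [Finset.mem_filter, Finset.mem_range, Finset.mem_Ico] at ht ⊢
          omega
        calc _ ≤ (Finset.Ico (k + 1) (k + 1 + τ)).card := Finset.card_le_card hsub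
          _ = τ := by rw [Nat.card_Ico]; omega
      have hsk : 0 ≤ s k := hs k (Nat.lt_succ_iff.mp (Finset.mem_range.mp hk))
      have : ((Finset.filter (fun t => k ∈ Finset.Ico (t - τ) t)
          (Finset.range (T + 1))).card : ℝ) ≤ (τ:ℝ) := by exact_mod_cast hcard
      exact mul_le_mul_of_nonneg_right this hsk
    calc _ ≤ ∑ k ∈ Finset.range (T + 1), (τ:ℝ) * s k := Finset.sum_le_sum step2
      _ = (τ:ℝ) * S := by rw [← Finset.mul_sum]
  -- per-step bound combining h1 and h2
  have hstep : ∀ t ∈ Finset.range (T + 1), (1/4) * s t ≤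
      (r t - r (t + 1)) / (4 * γ) + γ * c * (5/24)
        + (1/(60 * (τ:ℝ))) * ∑ k ∈ Finset.Ico (t - τ) t, s k := by
    intro t ht
    have htT : t ≤ T := Nat.lt_succ_iff.mp (Finset.mem_range.mp ht)
    have ha := h1 t htT
    have hb := h2 t htT
    have hb' : (L ^ 2 / 2) * R t ≤ (L ^ 2 / 2) * ((1 / (30 * L ^ 2 * τ)) *
        ∑ k ∈ Finset.Ico (t - τ) t, s k + γ * c / (6 * L ^ 2)) := by
      apply mul_le_mul_of_nonneg_left hb
      positivity
    have hident : (L ^ 2 / 2) * ((1 / (30 * L ^ 2 * τ)) *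
        ∑ k ∈ Finset.Ico (t - τ) t, s k + γ * c / (6 * L ^ 2))
        = (1/(60 * (τ:ℝ))) * (∑ k ∈ Finset.Ico (t - τ) t, s k) + γ * c / 12 := by
      field_simp
      ring
    rw [hident] at hb'
    linarith
  have hsum := Finset.sum_le_sum hstep
  have htel : ∑ t ∈ Finset.range (T + 1), ((r t - r (t + 1)) / (4 * γ) + γ * c * (5/24)
      + (1/(60 * (τ:ℝ))) * ∑ k ∈ Finset.Ico (t - τ) t, s k)
      = (r 0 - r (T + 1)) / (4 * γ) + ((T:ℝ) + 1) * (γ * c * (5/24))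
        + (1/(60 * (τ:ℝ))) * ∑ t ∈ Finset.range (T + 1), ∑ k ∈ Finset.Ico (t - τ) t, s k := by
    rw [Finset.sum_add_distrib, Finset.sum_add_distrib, ← Finset.sum_div,
      Finset.sum_range_sub' r, Finset.sum_const, ← Finset.mul_sum, Finset.card_range,
      nsmul_eq_mul]
    push_cast
    ring
  have hLsum : ∑ t ∈ Finset.range (T + 1), (1/4) * s t = (1/4) * S := by
    rw [← Finset.mul_sum]
  rw [hLsum, htel] at hsum
  have hrT1 : 0 ≤ r (T + 1) := hr (T + 1) le_rfl
  have hr0 : 0 ≤ r 0 := hr 0 (by omega)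
  have hkey' : (1/(60 * (τ:ℝ))) * (∑ t ∈ Finset.range (T + 1),
      ∑ k ∈ Finset.Ico (t - τ) t, s k) ≤ (1/(60 * (τ:ℝ))) * ((τ:ℝ) * S) := by
    apply mul_le_mul_of_nonneg_left key
    positivity
  have hτS : (1/(60 * (τ:ℝ))) * ((τ:ℝ) * S) = S / 60 := by
    field_simp
  rw [hτS] at hkey'
  have hdivr : (r 0 - r (T + 1)) / (4 * γ) ≤ r 0 / (4 * γ) := by
    apply div_le_div_of_nonneg_right ?_ (by positivity)
    linarith
  -- combine: (1/4) S ≤ r0/(4γ) + (T+1) γc(5/24) + S/60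
  have hmain : (7/30) * S ≤ r 0 / (4 * γ) + ((T:ℝ) + 1) * (γ * c * (5/24)) := by
    linarith
  have hT1 : (0:ℝ) < (T:ℝ) + 1 := by positivity
  have hS5 : S / 5 ≤ r 0 / (4 * γ) + ((T:ℝ) + 1) * γ * c / 4 := by
    nlinarith [mul_nonneg (mul_nonneg hT1.le hγ.le) hc]
  calc (1 / (5 * ((T:ℝ) + 1))) * S = (S / 5) * (1 / ((T:ℝ) + 1)) := by
        field_simp
    _ ≤ (r 0 / (4 * γ) + ((T:ℝ) + 1) * γ * c / 4) * (1 / ((T:ℝ) + 1)) := by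
        apply mul_le_mul_of_nonneg_right hS5
        positivity
    _ = r 0 / (4 * γ * ((T:ℝ) + 1)) + γ * c / 4 := by
        field_simp
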